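/- For the 1-dimensional Neumann heat kernel on (0,1), given by the eigenfunction expansion G_t(x,y) = 1 + ∑_{n≥1} 2 e^{-n²π²t} cos(nπx) cos(nπy), there exists a constant C > 0 such that for all t > 0 and all x, y ∈ [0,1], ∫₀¹ (G_t(x,ξ) − G_t(y,ξ))² dξ ≤ C |x−y|² / t^{3/2}. -/

import Mathlib

open MeasureTheory Real Filter

/-- Neumann heat kernel on (0,1), via its eigenfunction expansion. -/
noncomputable def NeumannHeatKernel (t x y : ℝ) : ℝ :=
  1 + ∑' n : ℕ, 2 * Real.exp (-((n + 1 : ℝ) ^ 2) * Real.pi ^ 2 * t) *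
      Real.cos ((n + 1 : ℝ) * Real.pi * x) * Real.cos ((n + 1 : ℝ) * Real.pi * y)

noncomputable def hkA (t x y : ℝ) (n : ℕ) : ℝ :=
  2 * Real.exp (-((n + 1 : ℝ) ^ 2) * Real.pi ^ 2 * t) *
    (Real.cos ((n + 1 : ℝ) * Real.pi * x) - Real.cos ((n + 1 : ℝ) * Real.pi * y))

noncomputable def hkC (n : ℕ) (ξ : ℝ) : ℝ := Real.cos ((n + 1 : ℝ) * Real.pi * ξ)

theorem hk_int_cos' (k : ℤ) : ∫ ξ in (0:ℝ)..1, Real.cos (k*π*ξ) = if k = 0 then 1 else 0 := by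
  rcases eq_or_ne k 0 with h | h
  · simp [h]
  · have hc : (k:ℝ)*π ≠ 0 := mul_ne_zero (Int.cast_ne_zero.2 h) pi_ne_zero
    have h2 := intervalIntegral.integral_comp_mul_left (a := (0:ℝ)) (b := 1) (c := (k:ℝ)*π)
      Real.cos hc
    simp only [mul_comm ((k:ℝ)*π), mul_zero, mul_one] at h2 ⊢
    rw [h2, integral_cos]
    simp [h, Real.sin_int_mul_pi]

theorem hk_orth (p q : ℕ) (hp : 1 ≤ p) (hq : 1 ≤ q) :
    ∫ ξ in (0:ℝ)..1, Real.cos (p*π*ξ) * Real.cos (q*π*ξ) = if p = q then 1/2 else 0 := by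
  have hi : ∀ k : ℤ, IntervalIntegrable (fun ξ : ℝ => Real.cos (k*π*ξ)) volume 0 1 :=
    fun k => (Real.continuous_cos.comp (by continuity)).intervalIntegrable 0 1
  have hpq : (p:ℤ) + q ≠ 0 := by omega
  calc ∫ ξ in (0:ℝ)..1, Real.cos (p*π*ξ) * Real.cos (q*π*ξ)
      = ∫ ξ in (0:ℝ)..1, (Real.cos ((((p:ℤ)+q : ℤ):ℝ)*π*ξ) + Real.cos ((((p:ℤ)-q : ℤ):ℝ)*π*ξ))/2 := by
        refine intervalIntegral.integral_congr (fun ξ _ => ?_)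
        push_cast
        rw [show ((p:ℝ)+q)*π*ξ = p*π*ξ + q*π*ξ by ring,
          show ((p:ℝ)-q)*π*ξ = p*π*ξ - q*π*ξ by ring, Real.cos_add, Real.cos_sub]
        ring
    _ = ((if ((p:ℤ)+q) = 0 then (1:ℝ) else 0) + (if ((p:ℤ)-q) = 0 then (1:ℝ) else 0))/2 := by
        rw [intervalIntegral.integral_div, intervalIntegral.integral_add (hi _) (hi _),
          hk_int_cos' _, hk_int_cos' _]
    _ = if p = q then 1/2 else 0 := by
        rcases eq_or_ne p q with h | h
        · have hq0 : q ≠ 0 := by omega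
          simp [h, hq0]
        · have : (p:ℤ) - q ≠ 0 := by
            simp only [sub_ne_zero]
            exact_mod_cast fun hh => h (by exact_mod_cast hh)
          simp [h, hpq, this]

theorem hk_summable_exp {c : ℝ} (hc : 0 < c) :
    Summable (fun n : ℕ => Real.exp (-(c * ((n:ℝ)+1)^2))) := by
  refine Summable.of_nonneg_of_le (fun n => (Real.exp_pos _).le) (fun n => ?_)
    (summable_geometric_of_lt_one (Real.exp_pos (-c)).le (Real.exp_lt_one_iff.2 (by linarith)))
  rw [← Real.exp_nat_mul]
  apply Real.exp_le_exp.2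
  have : (n:ℝ) ≤ ((n:ℝ)+1)^2 := by nlinarith [Nat.cast_nonneg (α := ℝ) n]
  nlinarith

theorem hk_summable_exp' {t : ℝ} (ht : 0 < t) :
    Summable (fun n : ℕ => Real.exp (-((n + 1 : ℝ) ^ 2) * Real.pi ^ 2 * t)) := by
  have h : 0 < Real.pi ^ 2 * t := by positivity
  refine (hk_summable_exp h).congr (fun n => ?_)
  congr 1; ring

theorem hk_L1 {a : ℝ} (ha : 0 < a) (m : ℕ) :
    ((m:ℝ)+1)^2 * Real.exp (-(a * ((m:ℝ)+1)^2)) ≤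
      2 / (a * Real.exp 1) * Real.exp (-(a/2 * ((m:ℝ)+1)^2)) := by
  set u : ℝ := a/2 * ((m:ℝ)+1)^2 with hu
  have hu0 : 0 < u := by positivity
  have h1 : u ≤ Real.exp (u - 1) := by
    have := Real.add_one_le_exp (u - 1); linarith
  have h2 : ((m:ℝ)+1)^2 = 2/a * u := by rw [hu]; field_simp
  have h3 : Real.exp (-(a * ((m:ℝ)+1)^2)) = Real.exp (-u) * Real.exp (-u) := by
    rw [← Real.exp_add]; congr 1; rw [hu]; ring
  have key : ((m:ℝ)+1)^2 * Real.exp (-u) ≤ 2/(a * Real.exp 1) := by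
    rw [h2]
    calc 2/a * u * Real.exp (-u) = 2/a * (u * Real.exp (-u)) := by ring
      _ ≤ 2/a * (Real.exp (u-1) * Real.exp (-u)) := by
          have h5 : u * Real.exp (-u) ≤ Real.exp (u-1) * Real.exp (-u) :=
            mul_le_mul_of_nonneg_right h1 (Real.exp_pos _).le
          have : (0:ℝ) ≤ 2/a := by positivity
          exact mul_le_mul_of_nonneg_left h5 this
      _ = 2/(a * Real.exp 1) := by
          rw [← Real.exp_add, show u - 1 + -u = -1 by ring, Real.exp_neg]
          field_simp
  calc ((m:ℝ)+1)^2 * Real.exp (-(a * ((m:ℝ)+1)^2))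
      = (((m:ℝ)+1)^2 * Real.exp (-u)) * Real.exp (-u) := by rw [h3]; ring
    _ ≤ 2/(a * Real.exp 1) * Real.exp (-u) :=
        mul_le_mul_of_nonneg_right key (Real.exp_pos _).le

theorem hk_L2 {c : ℝ} (hc : 0 < c) :
    ∑' m:ℕ, Real.exp (-(c * ((m:ℝ)+1)^2)) ≤ Real.sqrt (π/c) / 2 := by
  apply Summable.tsum_le_of_sum_range_le (hk_summable_exp hc)
  intro N
  set f : ℝ → ℝ := fun s => Real.exp (-c * s^2) with hf
  have hmono : AntitoneOn f (Set.Icc (0:ℝ) (0 + (N:ℕ))) := by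
    intro s hs r hr hsr
    simp only [hf]
    apply Real.exp_le_exp.2
    have h0 : 0 ≤ s := hs.1
    have h2 : s^2 ≤ r^2 := by nlinarith
    nlinarith [mul_le_mul_of_nonneg_left h2 hc.le]
  have h := hmono.sum_le_integral
  have heq : ∀ i : ℕ, f (0 + ((i:ℕ)+1:ℕ)) = Real.exp (-(c * ((i:ℝ)+1)^2)) := by
    intro i; simp [hf]
  calc ∑ i ∈ Finset.range N, Real.exp (-(c * ((i:ℝ)+1)^2))
      = ∑ i ∈ Finset.range N, f (0 + ((i:ℕ)+1:ℕ)) := by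
        exact Finset.sum_congr rfl (fun i _ => (heq i).symm)
    _ ≤ ∫ x in (0:ℝ)..(0 + (N:ℕ)), f x := h
    _ ≤ Real.sqrt (π/c) / 2 := by
        rw [intervalIntegral.integral_of_le (by positivity)]
        rw [← integral_gaussian_Ioi c]
        apply setIntegral_mono_set (integrableOn_Ioi_exp_neg_mul_sq_iff.2 hc)
        · exact Filter.Eventually.of_forall (fun x => (Real.exp_pos _).le)
        · exact Filter.Eventually.of_forall (Set.Ioc_subset_Ioi_self)

theorem hkA_abs_le (t x y : ℝ) (n : ℕ) :
    |hkA t x y n| ≤ 4 * Real.exp (-((n + 1 : ℝ) ^ 2) * Real.pi ^ 2 * t) := by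
  unfold hkA
  rw [abs_mul, abs_mul]
  have he : |Real.exp (-((n + 1 : ℝ) ^ 2) * Real.pi ^ 2 * t)|
      = Real.exp (-((n + 1 : ℝ) ^ 2) * Real.pi ^ 2 * t) := abs_of_pos (Real.exp_pos _)
  have hd : |Real.cos ((n + 1 : ℝ) * Real.pi * x) - Real.cos ((n + 1 : ℝ) * Real.pi * y)| ≤ 2 := by
    calc |Real.cos ((n + 1 : ℝ) * Real.pi * x) - Real.cos ((n + 1 : ℝ) * Real.pi * y)|
        ≤ |Real.cos ((n + 1 : ℝ) * Real.pi * x)| + |Real.cos ((n + 1 : ℝ) * Real.pi * y)| :=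
          abs_sub _ _
      _ ≤ 1 + 1 := add_le_add (Real.abs_cos_le_one _) (Real.abs_cos_le_one _)
      _ = 2 := by norm_num
  rw [he]
  have h2 : |(2:ℝ)| = 2 := by norm_num
  rw [h2]
  nlinarith [Real.exp_pos (-((n + 1 : ℝ) ^ 2) * Real.pi ^ 2 * t), abs_nonneg
    (Real.cos ((n + 1 : ℝ) * Real.pi * x) - Real.cos ((n + 1 : ℝ) * Real.pi * y))]

theorem hkA_summable_abs {t : ℝ} (x y : ℝ) (ht : 0 < t) :
    Summable (fun n => |hkA t x y n|) :=
  Summable.of_nonneg_of_le (fun n => abs_nonneg _) (hkA_abs_le t x y)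
    ((hk_summable_exp' ht).mul_left 4)

theorem hkA_summable {t : ℝ} (x y : ℝ) (ht : 0 < t) : Summable (hkA t x y) :=
  (hkA_summable_abs x y ht).of_abs

theorem hk_term_summable {t : ℝ} (x y : ℝ) (ht : 0 < t) :
    Summable (fun n : ℕ => 2 * Real.exp (-((n + 1 : ℝ) ^ 2) * Real.pi ^ 2 * t) *
      Real.cos ((n + 1 : ℝ) * Real.pi * x) * Real.cos ((n + 1 : ℝ) * Real.pi * y)) := by
  apply Summable.of_norm_bounded ((hk_summable_exp' ht).mul_left 2)
  intro n
  rw [Real.norm_eq_abs, abs_mul, abs_mul, abs_mul]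
  have h1 := Real.abs_cos_le_one ((n + 1 : ℝ) * Real.pi * x)
  have h2 := Real.abs_cos_le_one ((n + 1 : ℝ) * Real.pi * y)
  have he : |Real.exp (-((n + 1 : ℝ) ^ 2) * Real.pi ^ 2 * t)|
      = Real.exp (-((n + 1 : ℝ) ^ 2) * Real.pi ^ 2 * t) := abs_of_pos (Real.exp_pos _)
  rw [he, show |(2:ℝ)| = 2 by norm_num]
  refine le_trans ?_ (le_of_eq (by ring :
    2 * Real.exp (-((n + 1 : ℝ) ^ 2) * Real.pi ^ 2 * t) * 1 * 1
      = 2 * Real.exp (-((n + 1 : ℝ) ^ 2) * Real.pi ^ 2 * t)))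
  gcongr

theorem hk_diff {t : ℝ} (x y : ℝ) (ht : 0 < t) (ξ : ℝ) :
    NeumannHeatKernel t x ξ - NeumannHeatKernel t y ξ = ∑' n : ℕ, hkA t x y n * hkC n ξ := by
  unfold NeumannHeatKernel
  have hx := hk_term_summable x ξ ht
  have hy := hk_term_summable y ξ ht
  rw [show ∀ A B : ℝ, 1 + A - (1 + B) = A - B by intro A B; ring]
  rw [← Summable.tsum_sub hx hy]
  refine tsum_congr (fun n => ?_)
  unfold hkA hkC
  ring

theorem hk_parseval {t : ℝ} (x y : ℝ) (ht : 0 < t) :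
    ∫ ξ in (0:ℝ)..1, (NeumannHeatKernel t x ξ - NeumannHeatKernel t y ξ)^2
      = ∑' n : ℕ, (hkA t x y n)^2 / 2 := by
  set a := hkA t x y with ha
  set f : ℝ → ℝ := fun ξ => ∑' n : ℕ, a n * hkC n ξ with hf
  have haS : Summable fun n => |a n| := hkA_summable_abs x y ht
  set S : ℝ := ∑' n : ℕ, |a n| with hSdef
  have hCcont : ∀ n : ℕ, Continuous (hkC n) := by
    intro n; unfold hkC; continuity
  have hCle : ∀ (n : ℕ) (ξ : ℝ), |hkC n ξ| ≤ 1 := fun n ξ => Real.abs_cos_le_one _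
  have hbound : ∀ (n : ℕ) (ξ : ℝ), ‖a n * hkC n ξ‖ ≤ |a n| := by
    intro n ξ
    rw [Real.norm_eq_abs, abs_mul]
    exact mul_le_of_le_one_right (abs_nonneg _) (hCle n ξ)
  have hf_cont : Continuous f :=
    continuous_tsum (fun n => continuous_const.mul (hCcont n)) haS hbound
  have hfb : ∀ ξ, |f ξ| ≤ S := by
    intro ξ
    have hsum2 : Summable fun n => ‖a n * hkC n ξ‖ :=
      Summable.of_nonneg_of_le (fun n => norm_nonneg _) (fun n => hbound n ξ) haS
    calc |f ξ| = ‖f ξ‖ := rfl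
      _ ≤ ∑' n, ‖a n * hkC n ξ‖ := norm_tsum_le_tsum_norm hsum2
      _ ≤ S := Summable.tsum_le_tsum (fun n => hbound n ξ) hsum2 haS
  have hS0 : 0 ≤ S := tsum_nonneg (fun n => abs_nonneg _)
  have horth' : ∀ n m : ℕ, ∫ ξ in Set.Ioc (0:ℝ) 1, hkC n ξ * hkC m ξ
      = if n = m then 1/2 else 0 := by
    intro n m
    rw [← intervalIntegral.integral_of_le zero_le_one]
    have h := hk_orth (n+1) (m+1) (by omega) (by omega)
    have h2 : ∀ ξ : ℝ, hkC n ξ * hkC m ξ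
        = Real.cos (((n+1:ℕ):ℝ)*Real.pi*ξ) * Real.cos (((m+1:ℕ):ℝ)*Real.pi*ξ) := by
      intro ξ; unfold hkC; push_cast; ring_nf
    simp only [h2]
    rw [h]
    simp
  have hinner : ∀ m : ℕ, ∫ ξ in Set.Ioc (0:ℝ) 1, f ξ * hkC m ξ = a m / 2 := by
    intro m
    have hFint : ∀ n : ℕ, Integrable (fun ξ => (a n * hkC n ξ) * hkC m ξ)
        (volume.restrict (Set.Ioc (0:ℝ) 1)) :=
      fun n => ((continuous_const.mul (hCcont n)).mul (hCcont m)).integrableOn_Ioc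
    have hFnorm_le : ∀ n : ℕ,
        (∫ ξ in Set.Ioc (0:ℝ) 1, ‖(a n * hkC n ξ) * hkC m ξ‖) ≤ |a n| := by
      intro n
      have hb : ∀ ξ, ‖(a n * hkC n ξ) * hkC m ξ‖ ≤ |a n| := by
        intro ξ
        rw [Real.norm_eq_abs, abs_mul, abs_mul]
        have h1 : |a n| * |hkC n ξ| ≤ |a n| :=
          mul_le_of_le_one_right (abs_nonneg _) (hCle n ξ)
        exact (mul_le_of_le_one_right (by positivity) (hCle m ξ)).trans h1
      calc (∫ ξ in Set.Ioc (0:ℝ) 1, ‖(a n * hkC n ξ) * hkC m ξ‖)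
          ≤ ∫ _ξ in Set.Ioc (0:ℝ) 1, |a n| :=
            integral_mono (hFint n).norm (integrable_const _) hb
        _ = |a n| := by simp [Real.volume_Ioc]
    have hFsum : Summable fun n => ∫ ξ in Set.Ioc (0:ℝ) 1, ‖(a n * hkC n ξ) * hkC m ξ‖ :=
      Summable.of_nonneg_of_le (fun n => integral_nonneg (fun ξ => norm_nonneg _))
        hFnorm_le haS
    have key := integral_tsum_of_summable_integral_norm hFint hFsum
    calc ∫ ξ in Set.Ioc (0:ℝ) 1, f ξ * hkC m ξ
        = ∫ ξ in Set.Ioc (0:ℝ) 1, ∑' n : ℕ, (a n * hkC n ξ) * hkC m ξ := by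
          refine integral_congr_ae (Filter.Eventually.of_forall (fun ξ => ?_))
          exact (tsum_mul_right).symm
      _ = ∑' n : ℕ, ∫ ξ in Set.Ioc (0:ℝ) 1, (a n * hkC n ξ) * hkC m ξ := key.symm
      _ = ∑' n : ℕ, a n * ∫ ξ in Set.Ioc (0:ℝ) 1, hkC n ξ * hkC m ξ := by
          refine tsum_congr (fun n => ?_)
          rw [show (fun ξ => (a n * hkC n ξ) * hkC m ξ)
              = fun ξ => a n * (hkC n ξ * hkC m ξ) from funext fun ξ => by ring,
            integral_const_mul]
      _ = ∑' n : ℕ, (if n = m then a m / 2 else 0) := by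
          refine tsum_congr (fun n => ?_)
          rw [horth' n m]
          rcases eq_or_ne n m with hnm | hnm
          · simp [hnm]; ring
          · simp [hnm]
      _ = a m / 2 := tsum_ite_eq m (fun _ => a m / 2)
  have hdiff : ∀ ξ, NeumannHeatKernel t x ξ - NeumannHeatKernel t y ξ = f ξ :=
    fun ξ => hk_diff x y ht ξ
  have hGint : ∀ n : ℕ, Integrable (fun ξ => (a n * hkC n ξ) * f ξ)
      (volume.restrict (Set.Ioc (0:ℝ) 1)) :=
    fun n => ((continuous_const.mul (hCcont n)).mul hf_cont).integrableOn_Ioc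
  have hGnorm_le : ∀ n : ℕ,
      (∫ ξ in Set.Ioc (0:ℝ) 1, ‖(a n * hkC n ξ) * f ξ‖) ≤ |a n| * S := by
    intro n
    have hb : ∀ ξ, ‖(a n * hkC n ξ) * f ξ‖ ≤ |a n| * S := by
      intro ξ
      rw [Real.norm_eq_abs, abs_mul]
      exact mul_le_mul (hbound n ξ) (hfb ξ) (abs_nonneg _) (abs_nonneg _)
    calc (∫ ξ in Set.Ioc (0:ℝ) 1, ‖(a n * hkC n ξ) * f ξ‖)
        ≤ ∫ _ξ in Set.Ioc (0:ℝ) 1, |a n| * S :=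
          integral_mono (hGint n).norm (integrable_const _) hb
      _ = |a n| * S := by simp [Real.volume_Ioc]
  have hGsum : Summable fun n => ∫ ξ in Set.Ioc (0:ℝ) 1, ‖(a n * hkC n ξ) * f ξ‖ :=
    Summable.of_nonneg_of_le (fun n => integral_nonneg (fun ξ => norm_nonneg _))
      hGnorm_le (haS.mul_right S)
  have key2 := integral_tsum_of_summable_integral_norm hGint hGsum
  rw [intervalIntegral.integral_of_le zero_le_one]
  calc ∫ ξ in Set.Ioc (0:ℝ) 1, (NeumannHeatKernel t x ξ - NeumannHeatKernel t y ξ)^2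
      = ∫ ξ in Set.Ioc (0:ℝ) 1, ∑' n : ℕ, (a n * hkC n ξ) * f ξ := by
        refine integral_congr_ae (Filter.Eventually.of_forall (fun ξ => ?_))
        show (NeumannHeatKernel t x ξ - NeumannHeatKernel t y ξ)^2 = ∑' n : ℕ, a n * hkC n ξ * f ξ
        rw [hdiff ξ, sq]
        exact (tsum_mul_right).symm
    _ = ∑' n : ℕ, ∫ ξ in Set.Ioc (0:ℝ) 1, (a n * hkC n ξ) * f ξ := key2.symm
    _ = ∑' n : ℕ, a n * (a n / 2) := by
        refine tsum_congr (fun n => ?_)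
        rw [show (fun ξ => (a n * hkC n ξ) * f ξ)
            = fun ξ => a n * (f ξ * hkC n ξ) from funext fun ξ => by ring,
          integral_const_mul, hinner n]
    _ = ∑' n : ℕ, (a n)^2 / 2 := tsum_congr (fun n => by ring)

theorem abs_cos_sub_cos' (a b : ℝ) : |Real.cos a - Real.cos b| ≤ |a - b| := by
  rw [Real.cos_sub_cos]
  calc |(-2) * Real.sin ((a+b)/2) * Real.sin ((a-b)/2)|
      = 2 * |Real.sin ((a+b)/2)| * |Real.sin ((a-b)/2)| := by
        rw [abs_mul, abs_mul]; simp
    _ ≤ 2 * 1 * |(a-b)/2| := by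
        gcongr 2 * ?_ * ?_
        · exact Real.abs_sin_le_one _
        · exact Real.abs_sin_le_abs
    _ = |a - b| := by rw [abs_div]; simp; ring

theorem hkA_sq_le {t : ℝ} (x y : ℝ) (n : ℕ) :
    (hkA t x y n)^2/2 ≤ 2*Real.pi^2*(x-y)^2 *
      (((n:ℝ)+1)^2 * Real.exp (-((2*Real.pi^2*t) * ((n:ℝ)+1)^2))) := by
  unfold hkA
  set E := Real.exp (-((n + 1 : ℝ) ^ 2) * Real.pi ^ 2 * t) with hE
  set Δ := Real.cos ((n + 1 : ℝ) * Real.pi * x) - Real.cos ((n + 1 : ℝ) * Real.pi * y) with hΔdef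
  have hE2 : E^2 = Real.exp (-((2*Real.pi^2*t) * ((n:ℝ)+1)^2)) := by
    rw [sq, hE, ← Real.exp_add]; congr 1; ring
  have hΔ : |Δ| ≤ ((n:ℝ)+1)*Real.pi*|x-y| := by
    refine (abs_cos_sub_cos' _ _).trans (le_of_eq ?_)
    rw [show (n + 1 : ℝ) * Real.pi * x - (n + 1 : ℝ) * Real.pi * y
        = ((n:ℝ)+1)*Real.pi*(x-y) by ring, abs_mul]
    congr 1
    exact abs_of_nonneg (by positivity)
  calc (2*E*Δ)^2/2 = 2*E^2*|Δ|^2 := by rw [sq_abs]; ring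
    _ ≤ 2*E^2*(((n:ℝ)+1)*Real.pi*|x-y|)^2 := by
        have h2 : |Δ|^2 ≤ (((n:ℝ)+1)*Real.pi*|x-y|)^2 :=
          pow_le_pow_left₀ (abs_nonneg _) hΔ 2
        have : (0:ℝ) ≤ 2*E^2 := by positivity
        exact mul_le_mul_of_nonneg_left h2 this
    _ = 2*Real.pi^2*(x-y)^2 * (((n:ℝ)+1)^2 * E^2) := by
        rw [show (((n:ℝ)+1)*Real.pi*|x-y|)^2 = ((n:ℝ)+1)^2*Real.pi^2*|x-y|^2 by ring, sq_abs]
        ring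
    _ = 2*Real.pi^2*(x-y)^2 *
        (((n:ℝ)+1)^2 * Real.exp (-((2*Real.pi^2*t) * ((n:ℝ)+1)^2))) := by rw [hE2]

theorem hk_tail_summable {A : ℝ} (hA : 0 < A) :
    Summable (fun n : ℕ => ((n:ℝ)+1)^2 * Real.exp (-(A * ((n:ℝ)+1)^2))) := by
  refine Summable.of_nonneg_of_le (fun n => by positivity) (fun n => hk_L1 hA n)
    ((hk_summable_exp (by positivity : (0:ℝ) < A/2)).mul_left _)

theorem hk_sum_bound {t : ℝ} (ht : 0 < t) :
    ∑' n : ℕ, ((n:ℝ)+1)^2 * Real.exp (-((2*Real.pi^2*t) * ((n:ℝ)+1)^2))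
      ≤ 1/(t*Real.sqrt t) := by
  have hπ := Real.pi_gt_three
  set A : ℝ := 2*Real.pi^2*t with hAdef
  have hA : 0 < A := by positivity
  have hA2 : 0 < A/2 := by positivity
  calc ∑' n : ℕ, ((n:ℝ)+1)^2 * Real.exp (-(A * ((n:ℝ)+1)^2))
      ≤ ∑' n : ℕ, 2/(A*Real.exp 1) * Real.exp (-(A/2 * ((n:ℝ)+1)^2)) :=
        Summable.tsum_le_tsum (fun n => hk_L1 hA n) (hk_tail_summable hA)
          ((hk_summable_exp hA2).mul_left _)
    _ = 2/(A*Real.exp 1) * ∑' n : ℕ, Real.exp (-(A/2 * ((n:ℝ)+1)^2)) := tsum_mul_left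
    _ ≤ 2/(A*Real.exp 1) * (Real.sqrt (Real.pi/(A/2))/2) := by
        have h0 : (0:ℝ) ≤ 2/(A*Real.exp 1) := by positivity
        exact mul_le_mul_of_nonneg_left (hk_L2 hA2) h0
    _ ≤ 1/(t*Real.sqrt t) := by
        have he1 : (1:ℝ) ≤ Real.exp 1 := by
          have := Real.add_one_le_exp 1; linarith
        have h4 : 2/(A*Real.exp 1) ≤ 1/t := by
          rw [div_le_div_iff₀ (by positivity) ht]
          have hπ2 : (9:ℝ) ≤ Real.pi^2 := by nlinarith
          rw [hAdef]
          nlinarith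
        have h5 : Real.sqrt (Real.pi/(A/2))/2 ≤ 1/Real.sqrt t := by
          have heq : Real.pi/(A/2) = 1/(Real.pi*t) := by
            rw [hAdef]; field_simp
          rw [heq]
          have h6 : (1:ℝ)/(Real.pi*t) ≤ 1/t := by
            apply one_div_le_one_div_of_le ht
            nlinarith
          calc Real.sqrt (1/(Real.pi*t))/2 ≤ Real.sqrt (1/t)/2 := by
                have := Real.sqrt_le_sqrt h6
                linarith
            _ ≤ Real.sqrt (1/t) := half_le_self (Real.sqrt_nonneg _)
            _ = 1/Real.sqrt t := by rw [one_div, Real.sqrt_inv, one_div]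
        calc 2/(A*Real.exp 1) * (Real.sqrt (Real.pi/(A/2))/2)
            ≤ (1/t) * (1/Real.sqrt t) := by
              apply mul_le_mul h4 h5 (by positivity) (by positivity)
          _ = 1/(t*Real.sqrt t) := by rw [div_mul_div_comm, one_mul]

theorem stmt_0 :
    ∃ C > 0, ∀ t : ℝ, 0 < t → ∀ x ∈ Set.Icc (0:ℝ) 1, ∀ y ∈ Set.Icc (0:ℝ) 1,
      ∫ ξ in (0:ℝ)..1, (NeumannHeatKernel t x ξ - NeumannHeatKernel t y ξ) ^ 2 ≤
        C * |x - y| ^ 2 / t ^ ((3:ℝ)/2) := by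
  refine ⟨2*Real.pi^2, by positivity, ?_⟩
  intro t ht x hx y hy
  rw [hk_parseval x y ht]
  have hrt : t ^ ((3:ℝ)/2) = t * Real.sqrt t := by
    rw [show (3:ℝ)/2 = 1 + 1/2 by norm_num, Real.rpow_add ht, Real.rpow_one, ← Real.sqrt_eq_rpow]
  have hsum := hk_sum_bound ht
  have hA : (0:ℝ) < 2*Real.pi^2*t := by positivity
  calc ∑' n : ℕ, (hkA t x y n)^2/2
      ≤ ∑' n : ℕ, 2*Real.pi^2*(x-y)^2 *
          (((n:ℝ)+1)^2 * Real.exp (-((2*Real.pi^2*t) * ((n:ℝ)+1)^2))) :=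
        Summable.tsum_le_tsum (fun n => hkA_sq_le x y n)
          (Summable.of_nonneg_of_le (fun n => by positivity) (fun n => hkA_sq_le x y n)
            ((hk_tail_summable hA).mul_left _))
          ((hk_tail_summable hA).mul_left _)
    _ = 2*Real.pi^2*(x-y)^2 *
        ∑' n : ℕ, ((n:ℝ)+1)^2 * Real.exp (-((2*Real.pi^2*t) * ((n:ℝ)+1)^2)) := tsum_mul_left
    _ ≤ 2*Real.pi^2*(x-y)^2 * (1/(t*Real.sqrt t)) :=
        mul_le_mul_of_nonneg_left hsum (by positivity)
    _ = 2*Real.pi^2 * |x-y|^2 / t^((3:ℝ)/2) := by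
        rw [hrt, ← sq_abs (x-y)]; ring
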